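/- arXiv:2003.02180 — 2 statements merged into one kernel-verified Lean document; each statement's English description precedes it below -/
import Mathlib

section
/- Let s ∈ ℝ and S = s·I₃. Then for every T ∈ SO(3) and every (R, x) ∈ SO(3)×ℝⁿ, the matrix Fisher–Gaussian density with parameters (μ, Σ, P, U, S, V) equals the matrix Fisher–Gaussian density with parameters (μ, Σ, PT, UT, S, VT); i.e., when all three singular values of the matrix Fisher parameter are equal, the MFG distribution is invariant under a simultaneous rotation of U, V, and P by any T ∈ SO(3). -/
open Matrix MeasureTheory Real

noncomputable section

abbrev Mat3 := Matrix (Fin 3) (Fin 3) ℝ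

instance : MeasurableSpace Mat3 :=
  show MeasurableSpace (Fin 3 → Fin 3 → ℝ) from inferInstance

/-- `SO(3)`: real 3×3 matrices with `RᵀR = I` and `det R = 1`. -/
def SO3 : Set Mat3 := {R | Rᵀ * R = 1 ∧ R.det = 1}

/-- The hat map `∧ : ℝ³ → ℝ^{3×3}`, `(hat v) w = v × w`. -/
def hat (v : Fin 3 → ℝ) : Mat3 :=
  !![0, -v 2, v 1; v 2, 0, -v 0; -v 1, v 0, 0]

/-- The vee map `∨`, inverse of the hat map on skew-symmetric matrices. -/
def vee (A : Mat3) : Fin 3 → ℝ := ![A 2 1, A 0 2, A 1 0]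

/-- `ν` is the bi-invariant Haar probability measure on `SO(3)`. -/
def IsHaarSO3 (ν : Measure Mat3) : Prop :=
  IsProbabilityMeasure ν ∧ ν SO3ᶜ = 0 ∧
    (∀ A ∈ SO3, Measure.map (fun R => A * R) ν = ν) ∧
    (∀ A ∈ SO3, Measure.map (fun R => R * A) ν = ν)

/-- The normalizing constant `c(F) = ∫_{SO(3)} etr(FᵀQ) dQ`. -/
def cF (ν : Measure Mat3) (F : Mat3) : ℝ := ∫ Q, Real.exp ((Fᵀ * Q).trace) ∂ν

/-- The tangent-space deviation `ν_R = (QS − SQᵀ)∨`, `Q = UᵀRV`. -/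
def nuR (U S V R : Mat3) : Fin 3 → ℝ :=
  vee ((Uᵀ * R * V) * S - S * (Uᵀ * R * V)ᵀ)

/-- `Σ_c = Σ − P(tr(S)I − S)Pᵀ`. -/
def sigmaC {n : ℕ} (Sig : Matrix (Fin n) (Fin n) ℝ) (P : Matrix (Fin n) (Fin 3) ℝ)
    (S : Mat3) : Matrix (Fin n) (Fin n) ℝ :=
  Sig - P * (S.trace • (1 : Mat3) - S) * Pᵀ

/-- The matrix Fisher–Gaussian density with parameters `(μ, Σ, P, U, S, V)`. -/
def mfg {n : ℕ} (ν : Measure Mat3) (μ : Fin n → ℝ) (Sig : Matrix (Fin n) (Fin n) ℝ)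
    (P : Matrix (Fin n) (Fin 3) ℝ) (U S V : Mat3) (R : Mat3) (x : Fin n → ℝ) : ℝ :=
  (cF ν (U * S * Vᵀ) * Real.sqrt ((2 * Real.pi) ^ n * (sigmaC Sig P S).det))⁻¹ *
    Real.exp (-(1/2) * ((x - (μ + P.mulVec (nuR U S V R))) ⬝ᵥ
      ((sigmaC Sig P S)⁻¹ *ᵥ (x - (μ + P.mulVec (nuR U S V R)))))) *
    Real.exp ((U * S * Vᵀ * Rᵀ).trace)

lemma adj_eq (M : Mat3) (hM : Mᵀ * M = 1) (hdet : M.det = 1) : M.adjugate = Mᵀ := by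
  have h3 : M * M.adjugate = 1 := by rw [Matrix.mul_adjugate, hdet, one_smul]
  calc M.adjugate = (Mᵀ * M) * M.adjugate := by rw [hM, one_mul]
    _ = Mᵀ * (M * M.adjugate) := by rw [Matrix.mul_assoc]
    _ = Mᵀ := by rw [h3, Matrix.mul_one]

lemma vee_conj (M A : Mat3) (hM : Mᵀ * M = 1) (hdet : M.det = 1) (hA : Aᵀ = -A) :
    vee (M * A * Mᵀ) = M.mulVec (vee A) := by
  have hadj := adj_eq M hM hdet
  rw [Matrix.adjugate_fin_three] at hadj
  have e00 : M 1 1 * M 2 2 - M 1 2 * M 2 1 = M 0 0 := by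
    have := congrFun (congrFun hadj 0) 0; simpa using this
  have e01 : -(M 0 1 * M 2 2) + M 0 2 * M 2 1 = M 1 0 := by
    have := congrFun (congrFun hadj 0) 1; simpa using this
  have e02 : M 0 1 * M 1 2 - M 0 2 * M 1 1 = M 2 0 := by
    have := congrFun (congrFun hadj 0) 2; simpa using this
  have e10 : -(M 1 0 * M 2 2) + M 1 2 * M 2 0 = M 0 1 := by
    have := congrFun (congrFun hadj 1) 0; simpa using this
  have e11 : M 0 0 * M 2 2 - M 0 2 * M 2 0 = M 1 1 := by
    have := congrFun (congrFun hadj 1) 1; simpa using this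
  have e12 : -(M 0 0 * M 1 2) + M 0 2 * M 1 0 = M 2 1 := by
    have := congrFun (congrFun hadj 1) 2; simpa using this
  have e20 : M 1 0 * M 2 1 - M 1 1 * M 2 0 = M 0 2 := by
    have := congrFun (congrFun hadj 2) 0; simpa using this
  have e21 : -(M 0 0 * M 2 1) + M 0 1 * M 2 0 = M 1 2 := by
    have := congrFun (congrFun hadj 2) 1; simpa using this
  have e22 : M 0 0 * M 1 1 - M 0 1 * M 1 0 = M 2 2 := by
    have := congrFun (congrFun hadj 2) 2; simpa using this
  have s : ∀ i j : Fin 3, A i j = -A j i := by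
    intro i j
    have := congrFun (congrFun hA j) i
    simpa [Matrix.transpose_apply] using this
  have z00 : A 0 0 = 0 := by linarith [s 0 0]
  have z11 : A 1 1 = 0 := by linarith [s 1 1]
  have z22 : A 2 2 = 0 := by linarith [s 2 2]
  have s01 := s 0 1; have s02 := s 0 2; have s12 := s 1 2
  funext k
  fin_cases k <;>
    simp [vee, Matrix.mul_apply, Matrix.mulVec, dotProduct, Fin.sum_univ_three] <;>
    simp only [z00, z11, z22, s01, s02, s12]
  · linear_combination A 2 1 * e00 - A 2 0 * e10 + A 1 0 * e20
  · linear_combination A 2 1 * e01 - A 2 0 * e11 + A 1 0 * e21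
  · linear_combination A 2 1 * e02 - A 2 0 * e12 + A 1 0 * e22

/-- When `S = s·I₃`, the MFG distribution is invariant under a
simultaneous rotation of `U`, `V`, and `P` by any `T ∈ SO(3)`. -/
theorem stmt18 (n : ℕ) (ν : Measure Mat3) (hν : IsHaarSO3 ν)
    (μ : Fin n → ℝ) (Sig : Matrix (Fin n) (Fin n) ℝ) (P : Matrix (Fin n) (Fin 3) ℝ)
    (U V : Mat3) (hU : U ∈ SO3) (hV : V ∈ SO3) (hSig : Sig.IsSymm)
    (sc : ℝ) (S : Mat3) (hS : S = sc • (1 : Mat3))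
    (hc : (sigmaC Sig P S).PosDef) :
    ∀ T ∈ SO3, ∀ R ∈ SO3, ∀ x : Fin n → ℝ,
      mfg ν μ Sig P U S V R x = mfg ν μ Sig (P * T) (U * T) S (V * T) R x := by
  subst hS
  rintro T ⟨hT1, hT2⟩ R hR x
  have hTT : T * Tᵀ = 1 := mul_eq_one_comm.mp hT1
  have cancel : ∀ {m : ℕ} (W : Matrix (Fin 3) (Fin m) ℝ), T * (Tᵀ * W) = W := by
    intro m W; rw [← Matrix.mul_assoc, hTT, Matrix.one_mul]
  -- F is unchanged
  have hF : U * T * (sc • (1 : Mat3)) * (V * T)ᵀ = U * (sc • (1 : Mat3)) * Vᵀ := by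
    rw [Matrix.transpose_mul, Matrix.mul_smul, Matrix.mul_smul, Matrix.smul_mul,
      Matrix.smul_mul, Matrix.mul_one, Matrix.mul_one]
    congr 1
    rw [Matrix.mul_assoc, cancel]
  -- sigmaC is unchanged
  have key : ∀ (c : ℝ), (P * T) * (c • (1 : Mat3)) * (P * T)ᵀ = P * (c • (1 : Mat3)) * Pᵀ := by
    intro c
    rw [Matrix.transpose_mul, Matrix.mul_smul, Matrix.mul_smul, Matrix.smul_mul,
      Matrix.smul_mul, Matrix.mul_one, Matrix.mul_one]
    congr 1
    rw [Matrix.mul_assoc, cancel]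
  have hform : ((sc • (1 : Mat3)).trace • (1 : Mat3) - sc • (1 : Mat3))
      = ((sc • (1 : Mat3)).trace - sc) • (1 : Mat3) := by rw [sub_smul]
  have hSc : sigmaC Sig (P * T) (sc • (1 : Mat3)) = sigmaC Sig P (sc • (1 : Mat3)) := by
    unfold sigmaC
    rw [hform, key]
  -- the mean is unchanged
  have hQ' : (U * T)ᵀ * R * (V * T) = Tᵀ * (Uᵀ * R * V) * T := by
    rw [Matrix.transpose_mul]
    simp only [Matrix.mul_assoc]
  set Q : Mat3 := Uᵀ * R * V with hQ
  set A : Mat3 := Q * (sc • (1 : Mat3)) - (sc • (1 : Mat3)) * Qᵀ with hAdef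
  have hskew : Aᵀ = -A := by
    rw [hAdef]
    rw [Matrix.transpose_sub, Matrix.transpose_mul, Matrix.transpose_mul]
    simp [Matrix.transpose_smul, Matrix.mul_smul, Matrix.smul_mul]
    rfl
  have hconj : (U * T)ᵀ * R * (V * T) * (sc • (1 : Mat3))
      - (sc • (1 : Mat3)) * ((U * T)ᵀ * R * (V * T))ᵀ = Tᵀ * A * (Tᵀ)ᵀ := by
    simp only [hQ', hAdef, hQ, Matrix.transpose_mul, Matrix.transpose_transpose,
      Matrix.mul_sub, Matrix.sub_mul, Matrix.mul_smul, Matrix.smul_mul,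
      Matrix.mul_one, Matrix.one_mul, Matrix.mul_assoc]
  have hMT1 : (Tᵀ)ᵀ * Tᵀ = 1 := by rw [Matrix.transpose_transpose]; exact hTT
  have hMT2 : (Tᵀ).det = 1 := by rw [Matrix.det_transpose]; exact hT2
  have hvee : nuR (U * T) (sc • (1 : Mat3)) (V * T) R
      = Tᵀ.mulVec (nuR U (sc • (1 : Mat3)) V R) := by
    unfold nuR
    rw [hconj]
    exact vee_conj Tᵀ A hMT1 hMT2 hskew
  have hnu : (P * T).mulVec (nuR (U * T) (sc • (1 : Mat3)) (V * T) R)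
      = P.mulVec (nuR U (sc • (1 : Mat3)) V R) := by
    rw [hvee, Matrix.mulVec_mulVec, Matrix.mul_assoc, hTT, Matrix.mul_one]
  unfold mfg
  rw [hF, hSc, hnu]

end
end

section
/- For i ∈ {1,2,3}, let 𝒟_i be the diagonal matrix whose i-th diagonal entry is +1 and whose other two diagonal entries are −1 (so 𝒟_i ∈ SO(3)). Then for every (R, x) ∈ SO(3)×ℝⁿ, the matrix Fisher–Gaussian density with parameters (μ, Σ, P, U, S, V) equals the matrix Fisher–Gaussian density with parameters (μ, Σ, P𝒟_i, U𝒟_i, S, V𝒟_i). -/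
open Matrix MeasureTheory Real

noncomputable section

/-- For `𝒟_i` the diagonal matrix with `+1` in the `i`-th diagonal
entry and `−1` in the other two, the MFG density with parameters `(μ, Σ, P, U, S, V)`
equals the one with parameters `(μ, Σ, P𝒟_i, U𝒟_i, S, V𝒟_i)`. -/
theorem stmt19 (n : ℕ) (ν : Measure Mat3) (hν : IsHaarSO3 ν)
    (μ : Fin n → ℝ) (Sig : Matrix (Fin n) (Fin n) ℝ) (P : Matrix (Fin n) (Fin 3) ℝ)
    (U V : Mat3) (hU : U ∈ SO3) (hV : V ∈ SO3) (hSig : Sig.IsSymm)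
    (s : Fin 3 → ℝ) (S : Mat3) (hS : S = Matrix.diagonal s)
    (hc : (sigmaC Sig P S).PosDef)
    (i : Fin 3) (D : Mat3)
    (hD : D = Matrix.diagonal (fun k => if k = i then (1 : ℝ) else -1)) :
    ∀ R ∈ SO3, ∀ x : Fin n → ℝ,
      mfg ν μ Sig P U S V R x = mfg ν μ Sig (P * D) (U * D) S (V * D) R x := by
  intro R hR x
  have hDT : Dᵀ = D := by subst hD; exact Matrix.diagonal_transpose _
  have hDD : D * D = 1 := by
    subst hD
    rw [Matrix.diagonal_mul_diagonal]
    ext j k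
    simp only [Matrix.diagonal_apply, Matrix.one_apply, Pi.mul_apply]
    split_ifs <;> norm_num
  have hDS : D * S = S * D := by
    subst hD hS
    rw [Matrix.diagonal_mul_diagonal, Matrix.diagonal_mul_diagonal]
    ext j k
    simp only [Matrix.diagonal_apply, Pi.mul_apply]
    split_ifs <;> ring
  have hDSD : D * S * D = S := by rw [hDS, mul_assoc, hDD, Matrix.mul_one]
  have hF : U * D * S * (V * D)ᵀ = U * S * Vᵀ := by
    rw [Matrix.transpose_mul, hDT,
      show U * D * S * (D * Vᵀ) = U * (D * S * D) * Vᵀ by simp only [Matrix.mul_assoc], hDSD]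
  have hsig : sigmaC Sig (P * D) S = sigmaC Sig P S := by
    unfold sigmaC
    rw [Matrix.transpose_mul, hDT]
    congr 1
    have hX : D * (S.trace • (1 : Mat3) - S) * D = S.trace • (1 : Mat3) - S := by
      rw [Matrix.mul_sub, Matrix.sub_mul, Matrix.mul_smul, mul_one, Matrix.smul_mul, hDD, hDSD]
    calc P * D * (S.trace • (1 : Mat3) - S) * (D * Pᵀ)
        = P * (D * (S.trace • (1 : Mat3) - S) * D) * Pᵀ := by simp only [Matrix.mul_assoc]
      _ = P * (S.trace • (1 : Mat3) - S) * Pᵀ := by rw [hX]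
  have hvee : ∀ A : Mat3, vee (D * A * D) = D *ᵥ (vee A) := by
    intro A
    subst hD
    funext m
    fin_cases m <;> fin_cases i <;>
      simp [vee, Matrix.mul_apply, Matrix.diagonal_apply, Matrix.mulVec, dotProduct,
        Fin.sum_univ_three] <;>
      norm_num
  have hmv : (P * D) *ᵥ (nuR (U * D) S (V * D) R) = P *ᵥ (nuR U S V R) := by
    have harg : (U * D)ᵀ * R * (V * D) * S - S * ((U * D)ᵀ * R * (V * D))ᵀ
        = D * ((Uᵀ * R * V) * S - S * (Uᵀ * R * V)ᵀ) * D := by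
      rw [Matrix.mul_sub, Matrix.sub_mul]
      congr 1
      · calc (U * D)ᵀ * R * (V * D) * S = Dᵀ * (Uᵀ * (R * (V * (D * S)))) := by
              rw [Matrix.transpose_mul]; simp only [Matrix.mul_assoc]
          _ = D * (Uᵀ * (R * (V * (S * D)))) := by rw [hDT, hDS]
          _ = D * (Uᵀ * R * V * S) * D := by simp only [Matrix.mul_assoc]
      · calc S * ((U * D)ᵀ * R * (V * D))ᵀ = S * D * (Vᵀ * (Rᵀ * (U * D))) := by
              simp only [Matrix.transpose_mul, Matrix.transpose_transpose, hDT,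
                Matrix.mul_assoc]
          _ = D * S * (Vᵀ * (Rᵀ * (U * D))) := by rw [← hDS]
          _ = D * (S * (Uᵀ * R * V)ᵀ) * D := by
              simp only [Matrix.transpose_mul, Matrix.transpose_transpose, Matrix.mul_assoc]
    unfold nuR
    rw [harg, hvee, Matrix.mulVec_mulVec, Matrix.mul_assoc P D D, hDD, Matrix.mul_one]
  unfold mfg
  rw [hF, hsig, hmv]

end
end
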